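/- Let T be an ergodic unitary Koopman operator on L²(μ), let H ⊂ L²(μ) be the orthogonal complement of the constants, and suppose T^{k_i} → aI + (1−a)T weakly for some sequence k_i → ∞ and a ∈ (0,1). If J : H → H ⊗ H is a bounded operator satisfying J T = (T ⊗ T) J, then J = 0. -/

import Mathlib

open Filter

-- (auxiliary lemmas)

private lemma ergo_aux {H : Type*} [NormedAddCommGroup H] [InnerProductSpace ℂ H]
    (T : H ≃ₗᵢ[ℂ] H) (herg : ∀ f : H, T f = f → f = 0)
    (z : H) (hz : ∀ v : H, (inner ℂ z (T v) : ℂ) = inner ℂ z v) : z = 0 := by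
  have key : ∀ v : H, (inner ℂ (T.symm z - z) v : ℂ) = 0 := by
    intro v
    have h1 : (inner ℂ z (T v) : ℂ) = inner ℂ (T.symm z) v := by
      conv_lhs => rw [← T.apply_symm_apply z]
      exact T.inner_map_map (T.symm z) v
    rw [inner_sub_left, ← h1, hz v, sub_self]
  have h2 : T.symm z - z = 0 := by
    have := key (T.symm z - z)
    rwa [inner_self_eq_zero] at this
  have h3 : T z = z := by
    have h4 : T.symm z = z := by rwa [sub_eq_zero] at h2
    conv_lhs => rw [← h4]
    exact T.apply_symm_apply z
  exact herg z h3

private lemma lim_dense {E : Type*} [NormedAddCommGroup E] [NormedSpace ℂ E]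
    (φ : ℕ → E →L[ℂ] ℂ) (L : E →L[ℂ] ℂ) (C : ℝ) (hC : ∀ i, ‖φ i‖ ≤ C)
    (s : Set E) (hs : Dense s)
    (h : ∀ w ∈ s, Tendsto (fun i => φ i w) atTop (nhds (L w)))
    (w : E) : Tendsto (fun i => φ i w) atTop (nhds (L w)) := by
  rw [Metric.tendsto_atTop]
  intro ε hε
  have hC0 : 0 ≤ C := le_trans (norm_nonneg _) (hC 0)
  set M : ℝ := C + ‖L‖ + 1 with hM
  have hM0 : 0 < M := by have := norm_nonneg L; positivity
  obtain ⟨w', hw's, hww'⟩ := hs.exists_dist_lt w (show (0:ℝ) < ε / (3 * M) by positivity)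
  obtain ⟨N, hN⟩ := (Metric.tendsto_atTop.mp (h w' hw's)) (ε / 3) (by positivity)
  refine ⟨N, fun i hi => ?_⟩
  have e1 : dist (φ i w) (φ i w') ≤ M * dist w w' := by
    rw [dist_eq_norm, ← map_sub, dist_eq_norm]
    calc ‖φ i (w - w')‖ ≤ ‖φ i‖ * ‖w - w'‖ := (φ i).le_opNorm _
      _ ≤ M * ‖w - w'‖ := by
          apply mul_le_mul_of_nonneg_right _ (norm_nonneg _)
          have := hC i; have := norm_nonneg L; linarith
  have e3 : dist (L w') (L w) ≤ M * dist w w' := by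
    rw [dist_eq_norm, ← map_sub]
    calc ‖L (w' - w)‖ ≤ ‖L‖ * ‖w' - w‖ := L.le_opNorm _
      _ ≤ M * ‖w' - w‖ := by
          apply mul_le_mul_of_nonneg_right _ (norm_nonneg _); linarith [hC0]
      _ = M * dist w w' := by rw [← dist_eq_norm, dist_comm]
  have e2 : dist (φ i w') (L w') < ε / 3 := hN i hi
  have emain : M * dist w w' < ε / 3 := by
    calc M * dist w w' < M * (ε / (3 * M)) := by
          exact mul_lt_mul_of_pos_left hww' hM0
      _ = ε / 3 := by field_simp
  calc dist (φ i w) (L w) ≤ dist (φ i w) (φ i w') + dist (φ i w') (L w') + dist (L w') (L w) :=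
        dist_triangle4 _ _ _ _
    _ < ε / 3 + ε / 3 + ε / 3 := by
        have := lt_of_le_of_lt e1 emain
        have := lt_of_le_of_lt e3 emain
        linarith
    _ = ε := by ring

/-- Let `T` be the (restriction to the mean-zero subspace `H` of `L²(μ)` of the)
ergodic unitary Koopman operator of an automorphism (so `T` has no nonzero fixed
vector in `H`), and suppose `T^{k_i} → aI + (1−a)T` weakly for some `k_i → ∞` and
`a ∈ (0,1)`.  Here the Hilbert space `K` together with the bilinear map `tp`, whose
elementary tensors have total span dense in `K` and satisfy
`⟪u⊗v, u'⊗v'⟫ = ⟪u,u'⟫⟪v,v'⟫`, plays the role of `H ⊗ H`, and `T2` is the tensor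
square `T ⊗ T`.  If `J : H → H ⊗ H` is a bounded operator with `J T = (T ⊗ T) J`,
then `J = 0`. -/
theorem stmt10 {H K : Type*}
    [NormedAddCommGroup H] [InnerProductSpace ℂ H] [CompleteSpace H]
    [NormedAddCommGroup K] [InnerProductSpace ℂ K] [CompleteSpace K]
    (tp : H →ₗ[ℂ] H →ₗ[ℂ] K)
    (htp_inner : ∀ u v u' v' : H,
      (inner ℂ (tp u v) (tp u' v') : ℂ) = (inner ℂ u u' : ℂ) * (inner ℂ v v' : ℂ))
    (htp_dense : Dense
      ((Submodule.span ℂ (Set.range fun p : H × H => tp p.1 p.2) : Submodule ℂ K) : Set K))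
    (T : H ≃ₗᵢ[ℂ] H)
    (herg : ∀ f : H, T f = f → f = 0)
    (k : ℕ → ℕ) (hk : Tendsto k atTop atTop)
    (a : ℝ) (ha0 : 0 < a) (ha1 : a < 1)
    (hweak : ∀ f g : H,
      Tendsto (fun i => (inner ℂ ((T ^ k i) f) g : ℂ)) atTop
        (nhds (inner ℂ ((a : ℂ) • f + ((1 - a : ℝ) : ℂ) • T f) g)))
    (T2 : K ≃ₗᵢ[ℂ] K) (hT2 : ∀ u v : H, T2 (tp u v) = tp (T u) (T v))
    (J : H →L[ℂ] K) (hJ : ∀ f : H, J (T f) = T2 (J f)) :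
    J = 0 := by
  set b : ℂ := (a : ℂ) with hbdef
  set c : ℂ := ((1 - a : ℝ) : ℂ) with hcdef
  have hb : b ≠ 0 := by
    simp only [hbdef, ne_eq, Complex.ofReal_eq_zero]; exact ne_of_gt ha0
  have hc1 : c = 1 - b := by rw [hbdef, hcdef]; push_cast; ring
  have hc : c ≠ 0 := by
    simp only [hcdef, ne_eq, Complex.ofReal_eq_zero]
    intro h; linarith [sub_eq_zero.mp h]
  have hnorm : ∀ w v : H, ‖tp w v‖ = ‖w‖ * ‖v‖ := by
    intro w v
    have h := htp_inner w v w v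
    rw [inner_self_eq_norm_sq_to_K, inner_self_eq_norm_sq_to_K, inner_self_eq_norm_sq_to_K] at h
    have hr : ‖tp w v‖ ^ 2 = ‖w‖ ^ 2 * ‖v‖ ^ 2 := by exact_mod_cast h
    nlinarith [norm_nonneg (tp w v), norm_nonneg w, norm_nonneg v,
      mul_nonneg (norm_nonneg w) (norm_nonneg v)]
  have hJn : ∀ (n : ℕ) (x : H), J ((T ^ n) x) = (T2 ^ n) (J x) := by
    intro n
    induction n with
    | zero => intro x; simp
    | succ n ih =>
        intro x
        simp only [pow_succ, LinearIsometryEquiv.coe_mul, Function.comp_apply]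
        rw [ih, hJ]
  have hT2n : ∀ (n : ℕ) (p q : H), (T2 ^ n) (tp p q) = tp ((T ^ n) p) ((T ^ n) q) := by
    intro n
    induction n with
    | zero => intro p q; simp
    | succ n ih =>
        intro p q
        simp only [pow_succ, LinearIsometryEquiv.coe_mul, Function.comp_apply]
        rw [hT2, ih]
  have hTsymm : ∀ z w : H, (inner ℂ (T.symm z) w : ℂ) = inner ℂ z (T w) := by
    intro z w
    conv_rhs => rw [← T.apply_symm_apply z]
    exact (T.inner_map_map (T.symm z) w).symm
  have hSlim : ∀ p g : H, Tendsto (fun i => (inner ℂ g ((T ^ k i) p) : ℂ)) atTop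
      (nhds (inner ℂ g (b • p + c • T p) : ℂ)) := by
    intro p g
    have h2 : Tendsto (fun i => (starRingEnd ℂ) (inner ℂ ((T ^ k i) p) g : ℂ)) atTop
        (nhds ((starRingEnd ℂ) (inner ℂ (b • p + c • T p) g))) :=
      ((Complex.continuous_conj.tendsto _).comp (hweak p g))
    simpa only [inner_conj_symm] using h2
  -- main pointwise goal
  ext x
  simp only [ContinuousLinearMap.zero_apply]
  set y : K := J x with hy
  -- the key identity
  have key : ∀ u v : H,
      (inner ℂ (tp u v) y : ℂ) + inner ℂ (tp (T.symm u) (T.symm v)) y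
        = inner ℂ (tp u (T.symm v)) y + inner ℂ (tp (T.symm u) v) y := by
    intro u v
    set φ : ℕ → K →L[ℂ] ℂ := fun i =>
      (innerSL ℂ (tp u v)).comp ((T2 ^ k i).toLinearIsometry.toContinuousLinearMap) with hφ
    have hφapp : ∀ i w, φ i w = (inner ℂ (tp u v) ((T2 ^ k i) w) : ℂ) := fun i w => rfl
    set L : K →L[ℂ] ℂ := (b * b) • innerSL ℂ (tp u v) + (b * c) • innerSL ℂ (tp u (T.symm v))
        + (b * c) • innerSL ℂ (tp (T.symm u) v)
        + (c * c) • innerSL ℂ (tp (T.symm u) (T.symm v)) with hL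
    have hLapp : ∀ w, L w = (b * b) * inner ℂ (tp u v) w + (b * c) * inner ℂ (tp u (T.symm v)) w
        + (b * c) * inner ℂ (tp (T.symm u) v) w
        + (c * c) * inner ℂ (tp (T.symm u) (T.symm v)) w := by
      intro w
      simp [hL, ContinuousLinearMap.add_apply, ContinuousLinearMap.smul_apply, innerSL_apply_apply,
        smul_eq_mul]
    have hφnorm : ∀ i, ‖φ i‖ ≤ ‖tp u v‖ := by
      intro i
      apply ContinuousLinearMap.opNorm_le_bound _ (norm_nonneg _)
      intro w
      calc ‖φ i w‖ ≤ ‖tp u v‖ * ‖(T2 ^ k i) w‖ := norm_inner_le_norm _ _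
        _ = ‖tp u v‖ * ‖w‖ := by rw [(T2 ^ k i).norm_map]
    have hbase : ∀ w ∈ (Submodule.span ℂ (Set.range fun p : H × H => tp p.1 p.2) : Submodule ℂ K),
        Tendsto (fun i => φ i w) atTop (nhds (L w)) := by
      intro w hw
      induction hw using Submodule.span_induction with
      | mem w hw =>
          obtain ⟨⟨p, q⟩, rfl⟩ := hw
          have heq : ∀ i, φ i (tp p q)
              = (inner ℂ u ((T ^ k i) p) : ℂ) * (inner ℂ v ((T ^ k i) q) : ℂ) := by
            intro i
            rw [hφapp, hT2n, htp_inner]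
          have hlim := (hSlim p u).mul (hSlim q v)
          have hval : L (tp p q)
              = (inner ℂ u (b • p + c • T p) : ℂ) * (inner ℂ v (b • q + c • T q) : ℂ) := by
            rw [hLapp]
            simp only [htp_inner, inner_add_right, inner_smul_right, hTsymm]
            ring
          rw [funext heq, hval]
          exact hlim
      | zero => simp only [map_zero]; exact tendsto_const_nhds
      | add w1 w2 h1 h2 ih1 ih2 =>
          simp only [map_add]
          exact ih1.add ih2
      | smul r w1 h1 ih =>
          simp only [map_smul, smul_eq_mul]
          exact ih.const_mul r
    have hlimall := lim_dense φ L (‖tp u v‖) hφnorm _ htp_dense hbase y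
    -- the J side
    have hJside : Tendsto (fun i => φ i y) atTop
        (nhds (inner ℂ ((ContinuousLinearMap.adjoint J) (tp u v)) (b • x + c • T x) : ℂ)) := by
      have h1 : ∀ i, φ i y
          = (inner ℂ ((ContinuousLinearMap.adjoint J) (tp u v)) ((T ^ k i) x) : ℂ) := by
        intro i
        rw [hφapp, hy, ← hJn, ContinuousLinearMap.adjoint_inner_left]
      rw [funext h1]
      exact hSlim x _
    have heq := tendsto_nhds_unique hlimall hJside
    have hrhs : (inner ℂ ((ContinuousLinearMap.adjoint J) (tp u v)) (b • x + c • T x) : ℂ)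
        = b * inner ℂ (tp u v) y + c * inner ℂ (tp (T.symm u) (T.symm v)) y := by
      rw [inner_add_right, inner_smul_right, inner_smul_right,
        ContinuousLinearMap.adjoint_inner_left, ContinuousLinearMap.adjoint_inner_left, hJ]
      have hsym : T2.symm (tp u v) = tp (T.symm u) (T.symm v) := by
        have h6 := hT2 (T.symm u) (T.symm v)
        rw [T.apply_symm_apply, T.apply_symm_apply] at h6
        rw [← h6, T2.symm_apply_apply]
      have h5 : (inner ℂ (tp u v) (T2 (J x)) : ℂ) = inner ℂ (tp (T.symm u) (T.symm v)) (J x) := by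
        calc (inner ℂ (tp u v) (T2 (J x)) : ℂ)
            = inner ℂ (T2 (T2.symm (tp u v))) (T2 (J x)) := by rw [T2.apply_symm_apply]
          _ = inner ℂ (T2.symm (tp u v)) (J x) := T2.inner_map_map _ _
          _ = inner ℂ (tp (T.symm u) (T.symm v)) (J x) := by rw [hsym]
      rw [h5, hy]
    rw [hrhs, hLapp] at heq
    -- algebra
    rw [hc1] at heq
    have hbc : b * (1 - b) ≠ 0 := mul_ne_zero hb (by rw [← hc1]; exact hc)
    apply mul_left_cancel₀ hbc
    linear_combination -heq
  -- conjugated key, with u,v replaced by T u, T v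
  have key2 : ∀ u v : H,
      (inner ℂ y (tp (T u) (T v)) : ℂ) + inner ℂ y (tp u v)
        = inner ℂ y (tp (T u) v) + inner ℂ y (tp u (T v)) := by
    intro u v
    have h := key (T u) (T v)
    simp only [T.symm_apply_apply] at h
    have h2 := congrArg (starRingEnd ℂ) h
    simpa only [map_add, inner_conj_symm] using h2
  -- step 1 : invariance in the first variable
  have step1 : ∀ u v : H, (inner ℂ y (tp (T u) v) : ℂ) = inner ℂ y (tp u v) := by
    intro u
    have hexp : ∀ v' : H,
        (inner ℂ y (tp (T u - u) v') : ℂ) = inner ℂ y (tp (T u) v') - inner ℂ y (tp u v') := by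
      intro v'
      rw [map_sub, LinearMap.sub_apply, inner_sub_right]
    have hbound : ∀ v : H, ‖(inner ℂ y (tp (T u - u) v) : ℂ)‖ ≤ (‖y‖ * ‖T u - u‖) * ‖v‖ := by
      intro v
      calc ‖(inner ℂ y (tp (T u - u) v) : ℂ)‖ ≤ ‖y‖ * ‖tp (T u - u) v‖ := norm_inner_le_norm _ _
        _ = (‖y‖ * ‖T u - u‖) * ‖v‖ := by rw [hnorm]; ring
    set φψ : H →L[ℂ] ℂ := LinearMap.mkContinuous
      { toFun := fun v => (inner ℂ y (tp (T u - u) v) : ℂ)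
        map_add' := fun v1 v2 => by simp [map_add, inner_add_right]
        map_smul' := fun r v => by simp [map_smul, inner_smul_right] }
      (‖y‖ * ‖T u - u‖) hbound with hφψ
    set z : H := (InnerProductSpace.toDual ℂ H).symm φψ with hzdef
    have hzv : ∀ v : H, (inner ℂ z v : ℂ) = inner ℂ y (tp (T u - u) v) := by
      intro v
      rw [hzdef]
      exact InnerProductSpace.toDual_symm_apply
    have hinv : ∀ v : H, (inner ℂ z (T v) : ℂ) = inner ℂ z v := by
      intro v
      rw [hzv, hzv, hexp, hexp]
      linear_combination key2 u v
    have hz0 : z = 0 := ergo_aux T herg z hinv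
    intro v
    have h0 : (inner ℂ y (tp (T u - u) v) : ℂ) = 0 := by
      rw [← hzv, hz0, inner_zero_left]
    rw [hexp] at h0
    exact sub_eq_zero.mp h0
  -- step 2 : everything is orthogonal to y
  have step2 : ∀ v u : H, (inner ℂ y (tp u v) : ℂ) = 0 := by
    intro v
    have hbound : ∀ u : H, ‖(inner ℂ y (tp u v) : ℂ)‖ ≤ (‖y‖ * ‖v‖) * ‖u‖ := by
      intro u
      calc ‖(inner ℂ y (tp u v) : ℂ)‖ ≤ ‖y‖ * ‖tp u v‖ := norm_inner_le_norm _ _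
        _ = (‖y‖ * ‖v‖) * ‖u‖ := by rw [hnorm]; ring
    set χ : H →L[ℂ] ℂ := LinearMap.mkContinuous
      { toFun := fun u => (inner ℂ y (tp u v) : ℂ)
        map_add' := fun u1 u2 => by simp [map_add, LinearMap.add_apply, inner_add_right]
        map_smul' := fun r u => by simp [map_smul, LinearMap.smul_apply, inner_smul_right] }
      (‖y‖ * ‖v‖) hbound with hχ
    set z : H := (InnerProductSpace.toDual ℂ H).symm χ with hzdef
    have hzv : ∀ u : H, (inner ℂ z u : ℂ) = inner ℂ y (tp u v) := by
      intro u
      rw [hzdef]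
      exact InnerProductSpace.toDual_symm_apply
    have hinv : ∀ u : H, (inner ℂ z (T u) : ℂ) = inner ℂ z u := by
      intro u
      rw [hzv, hzv]
      exact step1 u v
    have hz0 : z = 0 := ergo_aux T herg z hinv
    intro u
    rw [← hzv, hz0, inner_zero_left]
  -- conclude
  have horth : ∀ w ∈ (Submodule.span ℂ (Set.range fun p : H × H => tp p.1 p.2) : Submodule ℂ K),
      (inner ℂ y w : ℂ) = 0 := by
    intro w hw
    induction hw using Submodule.span_induction with
    | mem w hw =>
        obtain ⟨⟨p, q⟩, rfl⟩ := hw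
        exact step2 q p
    | zero => simp
    | add w1 w2 h1 h2 ih1 ih2 => rw [inner_add_right, ih1, ih2, add_zero]
    | smul r w1 h1 ih => rw [inner_smul_right, ih, mul_zero]
  have hclosed : IsClosed {w : K | (inner ℂ y w : ℂ) = 0} :=
    isClosed_eq (Continuous.inner continuous_const continuous_id) continuous_const
  have huniv : (Set.univ : Set K) ⊆ {w : K | (inner ℂ y w : ℂ) = 0} := by
    calc (Set.univ : Set K)
        = closure ((Submodule.span ℂ (Set.range fun p : H × H => tp p.1 p.2) : Submodule ℂ K)
            : Set K) := (htp_dense.closure_eq).symm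
      _ ⊆ {w : K | (inner ℂ y w : ℂ) = 0} := closure_minimal horth hclosed
  have hy0 : (inner ℂ y y : ℂ) = 0 := huniv (Set.mem_univ y)
  exact inner_self_eq_zero.mp hy0
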